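/- Let F be a group acting on a group G by group automorphisms, let g, h ∈ G, let F_g and F_h denote the stabilizers in F of g and h, and fix x ∈ F. Set z := (x•g)·h, let S := F_z be the stabilizer of z in F, and let S act diagonally on the set P := {(a, b) ∈ orbit_F(g) × orbit_F(h) : a·b = z}. Then the assignment sending the S-orbit of a pair ((r•g), (s•h)) ∈ P (where r, s ∈ F and (r•g)(s•h) = z) to the double coset F_h s⁻¹r F_g is a well-defined bijection from the set of S-orbits of P onto the set of double cosets F_h y F_g (y ∈ F) such that (y•g)·h ∈ orbit_F(z). -/

import Mathlib

open MulAction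

section OrbitDosetAux

variable {F G : Type*} [Group F] [Group G] [MulDistribMulAction F G]
variable (g h : G) (x : F)

private lemma doset_indep {r s r' s' : F} (hg : r • g = r' • g) (hh : s • h = s' • h) :
    DoubleCoset.mk (stabilizer F h) (stabilizer F g) (s⁻¹ * r)
      = DoubleCoset.mk (stabilizer F h) (stabilizer F g) (s'⁻¹ * r') := by
  rw [DoubleCoset.eq]
  refine ⟨s'⁻¹ * s, ?_, r⁻¹ * r', ?_, by group⟩
  · rw [mem_stabilizer_iff, mul_smul, hh, inv_smul_smul]
  · rw [mem_stabilizer_iff, mul_smul, ← hg, inv_smul_smul]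

/-- The subtype `P`. -/
private abbrev P : Type _ :=
  {p : G × G // p.1 ∈ orbit F g ∧ p.2 ∈ orbit F h ∧ p.1 * p.2 = (x • g) * h}

private noncomputable def rOf (p : P g h x) : F := p.2.1.choose

private lemma rOf_spec (p : P g h x) : rOf g h x p • g = p.val.1 := p.2.1.choose_spec

private noncomputable def sOf (p : P g h x) : F := p.2.2.1.choose

private lemma sOf_spec (p : P g h x) : sOf g h x p • h = p.val.2 := p.2.2.1.choose_spec

private noncomputable def toD (p : P g h x) :
    DoubleCoset.Quotient (stabilizer F h : Set F) (stabilizer F g : Set F) :=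
  DoubleCoset.mk _ _ ((sOf g h x p)⁻¹ * rOf g h x p)

private lemma toD_eq (p : P g h x) {r s : F} (hr : r • g = p.val.1) (hs : s • h = p.val.2) :
    toD g h x p = DoubleCoset.mk (stabilizer F h) (stabilizer F g) (s⁻¹ * r) :=
  doset_indep g h (by rw [rOf_spec, hr]) (by rw [sOf_spec, hs])

private lemma toD_mem (p : P g h x) :
    ∃ y : F, DoubleCoset.mk (stabilizer F h) (stabilizer F g) y = toD g h x p ∧
      (y • g) * h ∈ orbit F ((x • g) * h) := by
  refine ⟨(sOf g h x p)⁻¹ * rOf g h x p, rfl, ⟨(sOf g h x p)⁻¹, ?_⟩⟩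
  have key : sOf g h x p • ((((sOf g h x p)⁻¹ * rOf g h x p) • g) * h) = (x • g) * h := by
    rw [smul_mul', ← mul_smul, mul_inv_cancel_left, rOf_spec, sOf_spec, p.2.2.2]
  show (sOf g h x p)⁻¹ • ((x • g) * h) = (((sOf g h x p)⁻¹ * rOf g h x p) • g) * h
  rw [← key, inv_smul_smul]

private lemma inj_aux (p q : P g h x) {r s r' s' : F}
    (hr : r • g = p.val.1) (hs : s • h = p.val.2)
    (hr' : r' • g = q.val.1) (hs' : s' • h = q.val.2)
    (hd : DoubleCoset.mk (stabilizer F h) (stabilizer F g) (s⁻¹ * r)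
        = DoubleCoset.mk (stabilizer F h) (stabilizer F g) (s'⁻¹ * r')) :
    ∃ t ∈ stabilizer F ((x • g) * h), t • p.val.1 = q.val.1 ∧ t • p.val.2 = q.val.2 := by
  rw [DoubleCoset.eq] at hd
  obtain ⟨b, hb, c, hc, hbc⟩ := hd
  have hcg : c • g = g := hc
  have hbh : b • h = h := hb
  have hr'eq : r' = s' * b * s⁻¹ * r * c := by
    have h0 : s' * (s'⁻¹ * r') = s' * (b * (s⁻¹ * r) * c) := by rw [hbc]
    rw [mul_inv_cancel_left] at h0
    rw [h0]; group
  have h1 : (s' * b * s⁻¹) • p.val.1 = q.val.1 := by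
    rw [← hr, ← hr', ← mul_smul, hr'eq, mul_smul (s' * b * s⁻¹ * r) c, hcg]
  have h2 : (s' * b * s⁻¹) • p.val.2 = q.val.2 := by
    rw [← hs, ← hs', ← mul_smul]
    have he : s' * b * s⁻¹ * s = s' * b := by group
    rw [he, mul_smul, hbh]
  refine ⟨s' * b * s⁻¹, ?_, h1, h2⟩
  have hp2 := p.2.2.2
  have hq2 := q.2.2.2
  rw [mem_stabilizer_iff, ← hp2, smul_mul', h1, h2, hq2, hp2]

private noncomputable def fAux :
    Quot (fun (p q : P g h x) =>
        ∃ s ∈ stabilizer F ((x • g) * h), s • p.val.1 = q.val.1 ∧ s • p.val.2 = q.val.2) →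
      {d : DoubleCoset.Quotient (stabilizer F h : Set F) (stabilizer F g : Set F) //
        ∃ y : F, DoubleCoset.mk (stabilizer F h) (stabilizer F g) y = d ∧
          (y • g) * h ∈ orbit F ((x • g) * h)} :=
  Quot.lift (fun p => ⟨toD g h x p, toD_mem g h x p⟩) (by
    rintro p q ⟨t, ht, h1, h2⟩
    refine Subtype.ext ?_
    show toD g h x p = toD g h x q
    rw [toD_eq g h x p (rOf_spec g h x p) (sOf_spec g h x p),
        toD_eq g h x q (r := t * rOf g h x p) (s := t * sOf g h x p)
          (by rw [mul_smul, rOf_spec, h1]) (by rw [mul_smul, sOf_spec, h2])]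
    congr 1
    group)

private lemma fAux_mk (p : P g h x) :
    fAux g h x (Quot.mk _ p) = ⟨toD g h x p, toD_mem g h x p⟩ := rfl

private lemma fAux_bij : Function.Bijective (fAux g h x) := by
  constructor
  · rintro ⟨p⟩ ⟨q⟩ hfeq
    rw [fAux_mk, fAux_mk, Subtype.mk_eq_mk] at hfeq
    rw [toD_eq g h x p (rOf_spec g h x p) (sOf_spec g h x p),
        toD_eq g h x q (rOf_spec g h x q) (sOf_spec g h x q)] at hfeq
    exact Quot.sound (inj_aux g h x p q (rOf_spec g h x p) (sOf_spec g h x p)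
      (rOf_spec g h x q) (sOf_spec g h x q) hfeq)
  · rintro ⟨d, y, hyd, u, hu⟩
    have hu' : u • ((x • g) * h) = (y • g) * h := hu
    refine ⟨Quot.mk _ ⟨((u⁻¹ * y) • g, u⁻¹ • h), mem_orbit g (u⁻¹ * y), mem_orbit h u⁻¹, ?_⟩, ?_⟩
    · rw [mul_smul, ← smul_mul', ← hu', inv_smul_smul]
    · rw [fAux_mk]
      refine Subtype.ext ?_
      show toD g h x _ = d
      rw [toD_eq g h x _ (r := u⁻¹ * y) (s := u⁻¹) rfl rfl, ← hyd]
      congr 1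
      group

end OrbitDosetAux

/-- Let `F` act on a group `G` by group automorphisms, `g, h ∈ G`, `x ∈ F`, and set
`z := (x • g) * h`.  Let `S := F_z` be the stabilizer of `z`, acting diagonally on the set
`P := {(a, b) ∈ orbit_F(g) × orbit_F(h) | a * b = z}` (the set of `S`-orbits of `P` is encoded
as the quotient `Quot` by the orbit relation).  Then the assignment sending the `S`-orbit of a
pair `((r • g), (s • h)) ∈ P` to the double coset `F_h (s⁻¹ * r) F_g` is a well-defined
bijection from the set of `S`-orbits of `P` onto the set of double cosets `F_h y F_g` with
`(y • g) * h ∈ orbit_F(z)`. -/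
theorem orbit_pairs_equiv_dosets {F G : Type*} [Group F] [Group G] [MulDistribMulAction F G]
    (g h : G) (x : F) :
    ∃ e : Quot (fun (p q : {p : G × G // p.1 ∈ orbit F g ∧ p.2 ∈ orbit F h ∧
            p.1 * p.2 = (x • g) * h}) =>
          ∃ s ∈ stabilizer F ((x • g) * h), s • p.val.1 = q.val.1 ∧ s • p.val.2 = q.val.2) ≃
        {d : DoubleCoset.Quotient (stabilizer F h : Set F) (stabilizer F g : Set F) //
          ∃ y : F, DoubleCoset.mk (stabilizer F h) (stabilizer F g) y = d ∧
            (y • g) * h ∈ orbit F ((x • g) * h)},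
      ∀ (r s : F) (hp : (r • g) * (s • h) = (x • g) * h),
        (e (Quot.mk _ ⟨(r • g, s • h), mem_orbit g r, mem_orbit h s, hp⟩) : 
            DoubleCoset.Quotient (stabilizer F h : Set F) (stabilizer F g : Set F)) =
          DoubleCoset.mk (stabilizer F h) (stabilizer F g) (s⁻¹ * r) := by
  refine ⟨Equiv.ofBijective (fAux g h x) (fAux_bij g h x), ?_⟩
  intro r s hp
  show (fAux g h x (Quot.mk _ ⟨(r • g, s • h), mem_orbit g r, mem_orbit h s, hp⟩)).val = _
  rw [fAux_mk]
  exact toD_eq g h x _ rfl rfl
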